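/- The sandpile group G(d,h) of the d-regular tree of depth h surjects onto (ℤ/dℤ)^{(d−1)^h}; consequently its rank (minimum number of generators) is at least (d−1)^h. -/

import Mathlib

namespace SandpileTree

/-- Vertices of the rooted `d`-regular tree of depth `h`: a depth `n ≤ h` together with
the path of steps from the root, padded with value `0` beyond the depth.
The step out of the root has `d` choices; each later step has `d - 1` choices. -/
def Vert (d h : ℕ) : Type :=
  {p : Fin (h + 1) × (Fin h → Fin d) //
    (∀ i : Fin h, (p.1 : ℕ) ≤ (i : ℕ) → (p.2 i : ℕ) = 0) ∧
    (∀ i : Fin h, 0 < (i : ℕ) → (i : ℕ) < (p.1 : ℕ) → (p.2 i : ℕ) < d - 1)}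

instance (d h : ℕ) : DecidableEq (Vert d h) := by unfold Vert; infer_instance
instance (d h : ℕ) : Fintype (Vert d h) := by unfold Vert; infer_instance

/-- The depth (distance from the root) of a vertex. -/
def depth {d h : ℕ} (v : Vert d h) : ℕ := (v.1.1 : ℕ)

/-- The root of the tree. -/
def root (d h : ℕ) (hd : 0 < d) : Vert d h :=
  ⟨(0, fun _ => ⟨0, hd⟩), by constructor <;> intro i <;> simp⟩

/-- `IsParent i j` means that `i` is the parent of `j` in the rooted tree. -/
def IsParent {d h : ℕ} (i j : Vert d h) : Prop :=
  depth j = depth i + 1 ∧ ∀ k : Fin h, (k : ℕ) < depth i → j.1.2 k = i.1.2 k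

instance {d h : ℕ} (i j : Vert d h) : Decidable (IsParent i j) := by
  unfold IsParent; infer_instance

/-- The row of the reduced Laplacian of the augmented tree corresponding to vertex `i`:
`δ i = d·x_i − x_{parent i} − ∑_{j child of i} x_j` (no parent term for the root, and
no children terms for the leaves, which are attached to the sink by `d-1` edges). -/
def delta (d h : ℕ) (i : Vert d h) : Vert d h → ℤ :=
  (d : ℤ) • Pi.single i 1
    - ∑ j ∈ Finset.univ.filter (fun j => IsParent j i), Pi.single j 1
    - ∑ j ∈ Finset.univ.filter (fun j => IsParent i j), Pi.single j 1

/-- The lattice `Λ ⊆ ℤ^V` spanned by the rows of the reduced Laplacian. -/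
def lat (d h : ℕ) : AddSubgroup (Vert d h → ℤ) :=
  AddSubgroup.closure (Set.range (delta d h))

/-- The sandpile group `G(d,h) = ℤ^V / Λ` of the `d`-regular tree of depth `h`. -/
abbrev SG (d h : ℕ) : Type := (Vert d h → ℤ) ⧸ lat d h

/-- The image `x̄ᵢ` of the standard basis vector `xᵢ` in the sandpile group. -/
def xbar (d h : ℕ) (i : Vert d h) : SG d h :=
  QuotientAddGroup.mk (Pi.single i 1)

/-- `θ(d,n) = ((d-1)^n - 1)/(d-2)`. -/
def theta (d n : ℕ) : ℕ := ((d - 1) ^ n - 1) / (d - 2)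

end SandpileTree


namespace SandpileTree

variable {d h : ℕ}


/-- `ℕ`-valued coordinates, padded by `0`. -/
def coordv (v : Vert d h) (i : ℕ) : ℕ :=
  if hi : i < h then (v.1.2 ⟨i, hi⟩ : ℕ) else 0

lemma depth_le (v : Vert d h) : depth v ≤ h := Nat.lt_succ_iff.mp v.1.1.isLt

lemma coordv_eq_zero (v : Vert d h) {i : ℕ} (hi : depth v ≤ i) : coordv v i = 0 := by
  unfold coordv
  split
  · exact v.2.1 _ hi
  · rfl

lemma coordv_lt (v : Vert d h) {i : ℕ} (h0 : 0 < i) (h2 : i < depth v) :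
    coordv v i < d - 1 := by
  have : i < h := lt_of_lt_of_le h2 (depth_le v)
  unfold coordv
  rw [dif_pos this]
  exact v.2.2 _ h0 h2

lemma coordv_lt_d (hd3 : 3 ≤ d) (v : Vert d h) (i : ℕ) : coordv v i < d := by
  unfold coordv
  split
  · exact (v.1.2 _).isLt
  · omega

lemma vert_ext {v w : Vert d h} (h1 : depth v = depth w)
    (h2 : ∀ i : ℕ, coordv v i = coordv w i) : v = w := by
  apply Subtype.ext
  apply Prod.ext
  · exact Fin.ext h1
  · funext i
    have := h2 i.val
    unfold coordv at this
    rw [dif_pos i.isLt, dif_pos i.isLt] at this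
    exact Fin.ext this

/-- Build a vertex from `ℕ` data. -/
def mkVert (hd3 : 3 ≤ d) (n : ℕ) (hn : n ≤ h) (g : ℕ → ℕ)
    (hg1 : 0 < n → g 0 < d) (hg2 : ∀ i, 0 < i → i < n → g i < d - 1) : Vert d h :=
  ⟨(⟨n, by omega⟩, fun i => if hi : (i : ℕ) < n then
      ⟨g i.val, by rcases Nat.eq_zero_or_pos i.val with h0 | h0
                   · rw [h0]; exact hg1 (by omega)
                   · have := hg2 i.val h0 hi; omega⟩
    else ⟨0, by omega⟩), by
    constructor
    · intro i hi
      simp only at hi ⊢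
      rw [dif_neg (by omega)]
    · intro i h0 hlt
      simp only at hlt ⊢
      rw [dif_pos (by omega : (i : ℕ) < n)]
      exact hg2 i.val h0 hlt⟩

@[simp] lemma mkVert_depth (hd3 : 3 ≤ d) (n : ℕ) (hn : n ≤ h) (g : ℕ → ℕ) (hg1) (hg2) :
    depth (mkVert hd3 n hn g hg1 hg2) = n := rfl

lemma mkVert_coordv (hd3 : 3 ≤ d) (n : ℕ) (hn : n ≤ h) (g : ℕ → ℕ) (hg1) (hg2) (i : ℕ) :
    coordv (mkVert hd3 n hn g hg1 hg2) i = if i < n then g i else 0 := by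
  unfold coordv mkVert
  by_cases hi : i < h
  · rw [dif_pos hi]
    simp only
    by_cases hin : i < n
    · rw [dif_pos hin, if_pos hin]
    · rw [dif_neg hin, if_neg hin]
  · rw [dif_neg hi, if_neg (by omega)]


lemma isParent_iff {i j : Vert d h} :
    IsParent i j ↔ depth j = depth i + 1 ∧ ∀ k, k < depth i → coordv j k = coordv i k := by
  unfold IsParent
  constructor
  · rintro ⟨h1, h2⟩
    refine ⟨h1, fun k hk => ?_⟩
    have hkh : k < h := by have := depth_le j; omega
    unfold coordv
    rw [dif_pos hkh, dif_pos hkh, h2 ⟨k, hkh⟩ hk]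
  · rintro ⟨h1, h2⟩
    refine ⟨h1, fun k hk => ?_⟩
    have := h2 k.val hk
    unfold coordv at this
    rw [dif_pos k.isLt, dif_pos k.isLt] at this
    exact Fin.ext this

/-- The parent of a vertex (junk value at the root). -/
def parent (hd3 : 3 ≤ d) (v : Vert d h) : Vert d h :=
  mkVert hd3 (depth v - 1) (by have := depth_le v; omega) (fun i => coordv v i)
    (fun _ => coordv_lt_d hd3 v 0) (fun i h0 hlt => coordv_lt v h0 (by omega))

@[simp] lemma parent_depth (hd3 : 3 ≤ d) (v : Vert d h) :
    depth (parent hd3 v) = depth v - 1 := rfl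

lemma parent_coordv (hd3 : 3 ≤ d) (v : Vert d h) (i : ℕ) :
    coordv (parent hd3 v) i = if i < depth v - 1 then coordv v i else 0 :=
  mkVert_coordv _ _ _ _ _ _ _

lemma isParent_parent (hd3 : 3 ≤ d) {v : Vert d h} (hv : 0 < depth v) :
    IsParent (parent hd3 v) v := by
  rw [isParent_iff]
  constructor
  · rw [parent_depth]; omega
  · intro k hk
    rw [parent_depth] at hk
    rw [parent_coordv, if_pos hk]

lemma eq_parent (hd3 : 3 ≤ d) {i j : Vert d h} (hp : IsParent i j) : i = parent hd3 j := by
  rw [isParent_iff] at hp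
  obtain ⟨h1, h2⟩ := hp
  apply vert_ext
  · rw [parent_depth]; omega
  · intro k
    rw [parent_coordv]
    by_cases hk : k < depth j - 1
    · rw [if_pos hk, h2 k (by omega)]
    · rw [if_neg hk, coordv_eq_zero i (by omega)]

/-- The child of `i` with step coordinate `c`. -/
def child (hd3 : 3 ≤ d) (i : Vert d h) (hi : depth i < h) (c : ℕ) (hc1 : c < d)
    (hc2 : 0 < depth i → c < d - 1) : Vert d h :=
  mkVert hd3 (depth i + 1) (by omega) (fun j => if j = depth i then c else coordv i j)
    (fun _ => by
      by_cases h0 : 0 = depth i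
      · rw [if_pos h0]; exact hc1
      · rw [if_neg h0]; exact coordv_lt_d hd3 i 0)
    (fun j h0 hlt => by
      by_cases hj : j = depth i
      · rw [if_pos hj]; exact hc2 (by omega)
      · rw [if_neg hj]; exact coordv_lt i h0 (by omega))

@[simp] lemma child_depth (hd3 : 3 ≤ d) (i : Vert d h) (hi) (c : ℕ) (hc1) (hc2) :
    depth (child hd3 i hi c hc1 hc2) = depth i + 1 := rfl

lemma child_coordv (hd3 : 3 ≤ d) (i : Vert d h) (hi) (c : ℕ) (hc1) (hc2) (j : ℕ) :
    coordv (child hd3 i hi c hc1 hc2) j =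
      if j < depth i + 1 then (if j = depth i then c else coordv i j) else 0 :=
  mkVert_coordv _ _ _ _ _ _ _

lemma isParent_child (hd3 : 3 ≤ d) (i : Vert d h) (hi) (c : ℕ) (hc1) (hc2) :
    IsParent i (child hd3 i hi c hc1 hc2) := by
  rw [isParent_iff]
  refine ⟨rfl, fun k hk => ?_⟩
  rw [child_coordv, if_pos (by omega), if_neg (by omega)]

lemma children_eq {i c c' : Vert d h} (h1 : IsParent i c) (h2 : IsParent i c')
    (h3 : coordv c (depth i) = coordv c' (depth i)) : c = c' := by
  rw [isParent_iff] at h1 h2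
  apply vert_ext
  · omega
  · intro k
    rcases lt_trichotomy k (depth i) with hk | hk | hk
    · rw [h1.2 k hk, h2.2 k hk]
    · rw [hk]; exact h3
    · rw [coordv_eq_zero c (by omega), coordv_eq_zero c' (by omega)]

lemma parent_child (hd3 : 3 ≤ d) (i : Vert d h) (hi) (c : ℕ) (hc1) (hc2) :
    parent hd3 (child hd3 i hi c hc1 hc2) = i :=
  (eq_parent hd3 (isParent_child hd3 i hi c hc1 hc2)).symm

/-- A vertex is *dependent* if its last step coordinate is maximal. -/
def Dep (v : Vert d h) : Prop :=
  0 < depth v ∧ coordv v (depth v - 1) = (if depth v = 1 then d - 1 else d - 2)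

instance (v : Vert d h) : Decidable (Dep v) := by unfold Dep; infer_instance

/-- The (dependent) last child of a vertex. -/
def lastChild (hd3 : 3 ≤ d) (i : Vert d h) (hi : depth i < h) : Vert d h :=
  child hd3 i hi (if depth i = 0 then d - 1 else d - 2) (by split <;> omega)
    (fun h0 => by rw [if_neg (by omega)]; omega)

lemma isParent_lastChild (hd3 : 3 ≤ d) (i : Vert d h) (hi : depth i < h) :
    IsParent i (lastChild hd3 i hi) := isParent_child _ _ _ _ _ _

@[simp] lemma lastChild_depth (hd3 : 3 ≤ d) (i : Vert d h) (hi : depth i < h) :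
    depth (lastChild hd3 i hi) = depth i + 1 := rfl

lemma lastChild_coordv (hd3 : 3 ≤ d) (i : Vert d h) (hi : depth i < h) :
    coordv (lastChild hd3 i hi) (depth i) = (if depth i = 0 then d - 1 else d - 2) := by
  unfold lastChild
  rw [child_coordv, if_pos (by omega), if_pos rfl]

lemma dep_lastChild (hd3 : 3 ≤ d) (i : Vert d h) (hi : depth i < h) :
    Dep (lastChild hd3 i hi) := by
  constructor
  · rw [lastChild_depth]; omega
  · rw [lastChild_depth]
    simp only [Nat.add_sub_cancel]
    rw [lastChild_coordv]
    by_cases h0 : depth i = 0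
    · rw [if_pos h0, if_pos (by omega)]
    · rw [if_neg h0, if_neg (by omega)]

lemma child_not_dep (hd3 : 3 ≤ d) {i c : Vert d h} (hi : depth i < h) (h1 : IsParent i c)
    (hne : c ≠ lastChild hd3 i hi) : ¬ Dep c := by
  intro hdep
  apply hne
  apply children_eq h1 (isParent_lastChild hd3 i hi)
  rw [lastChild_coordv]
  have hdc : depth c = depth i + 1 := h1.1
  have := hdep.2
  rw [hdc] at this
  simp only [Nat.add_sub_cancel] at this
  rw [this]
  by_cases h0 : depth i = 0
  · rw [if_pos (by omega), if_pos h0]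
  · rw [if_neg (by omega), if_neg h0]

lemma dep_eq_lastChild (hd3 : 3 ≤ d) {v : Vert d h} (hdep : Dep v) :
    v = lastChild hd3 (parent hd3 v)
      (by have h1 := hdep.1; have := depth_le v; rw [parent_depth]; omega) := by
  have hv := hdep.1
  apply children_eq (isParent_parent hd3 hv) (isParent_lastChild hd3 _ _)
  rw [lastChild_coordv, parent_depth]
  have := hdep.2
  rw [this]
  by_cases h0 : depth v = 1
  · rw [if_pos (by omega), if_pos (by omega)]
  · rw [if_neg (by omega), if_neg (by omega)]


open Finset in
/-- The weight vector determined by free values `x`. -/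
def sol (hd3 : 3 ≤ d) (x : Vert d h → ZMod d) (v : Vert d h) : ZMod d :=
  if depth v % 2 = h % 2 then
    if Dep v then
      (if hq : 2 ≤ depth v then - sol hd3 x (parent hd3 (parent hd3 v)) else 0)
        - ∑ c ∈ (univ.filter (fun c => IsParent (parent hd3 v) c)).erase v, x c
    else x v
  else 0
termination_by depth v
decreasing_by
  rw [parent_depth, parent_depth]; omega

lemma sol_odd (hd3 : 3 ≤ d) (x : Vert d h → ZMod d) {v : Vert d h}
    (hv : ¬ depth v % 2 = h % 2) : sol hd3 x v = 0 := by
  rw [sol, if_neg hv]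

lemma sol_free (hd3 : 3 ≤ d) (x : Vert d h → ZMod d) {v : Vert d h}
    (hv : depth v % 2 = h % 2) (hdep : ¬ Dep v) : sol hd3 x v = x v := by
  rw [sol, if_pos hv, if_neg hdep]

open Finset in
lemma sol_dep (hd3 : 3 ≤ d) (x : Vert d h → ZMod d) {v : Vert d h}
    (hv : depth v % 2 = h % 2) (hdep : Dep v) :
    sol hd3 x v =
      (if 2 ≤ depth v then - sol hd3 x (parent hd3 (parent hd3 v)) else 0)
        - ∑ c ∈ (univ.filter (fun c => IsParent (parent hd3 v) c)).erase v, x c := by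
  rw [sol, if_pos hv, if_pos hdep]
  by_cases hq : 2 ≤ depth v
  · rw [dif_pos hq, if_pos hq]
  · rw [dif_neg hq, if_neg hq]

open Finset in
/-- The key relation: `sol x` is orthogonal to every row of the reduced Laplacian mod `d`. -/
lemma sol_relation (hd3 : 3 ≤ d) (x : Vert d h → ZMod d) (i : Vert d h) :
    (∑ j ∈ univ.filter (fun j => IsParent j i), sol hd3 x j)
      + (∑ j ∈ univ.filter (fun j => IsParent i j), sol hd3 x j) = 0 := by
  by_cases he : depth i % 2 = h % 2
  · -- `i` even: every neighbor is odd
    rw [Finset.sum_eq_zero, Finset.sum_eq_zero, add_zero]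
    · intro j hj
      have hp : IsParent i j := (mem_filter.mp hj).2
      have h1 : depth j = depth i + 1 := hp.1
      exact sol_odd hd3 x (by omega)
    · intro j hj
      have hp : IsParent j i := (mem_filter.mp hj).2
      have h1 : depth i = depth j + 1 := hp.1
      exact sol_odd hd3 x (by omega)
  · -- `i` odd
    have hih : depth i < h := by
      have h1 := depth_le i
      rcases eq_or_lt_of_le h1 with h2 | h2
      · omega
      · exact h2
    set ℓ := lastChild hd3 i hih with hℓ
    have hmem : ℓ ∈ univ.filter (fun j => IsParent i j) := by
      rw [mem_filter]
      exact ⟨mem_univ _, isParent_lastChild hd3 i hih⟩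
    rw [← Finset.add_sum_erase _ _ hmem]
    have herase : ∀ c ∈ (univ.filter (fun j => IsParent i j)).erase ℓ,
        sol hd3 x c = x c := by
      intro c hc
      rw [mem_erase, mem_filter] at hc
      have hp : IsParent i c := hc.2.2
      have h1 : depth c = depth i + 1 := hp.1
      exact sol_free hd3 x (by omega) (child_not_dep hd3 hih hp hc.1)
    rw [Finset.sum_congr rfl herase]
    have hsl : sol hd3 x ℓ =
        (if 2 ≤ depth ℓ then - sol hd3 x (parent hd3 (parent hd3 ℓ)) else 0)
          - ∑ c ∈ (univ.filter (fun c => IsParent (parent hd3 ℓ) c)).erase ℓ, x c := by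
      apply sol_dep hd3 x _ (dep_lastChild hd3 i hih)
      have h2 : depth (lastChild hd3 i hih) = depth i + 1 := rfl
      omega
    have hpc : parent hd3 ℓ = i := parent_child hd3 i hih _ _ _
    rw [hpc] at hsl
    by_cases h0 : depth i = 0
    · -- i is the root
      rw [Finset.filter_false_of_mem, Finset.sum_empty]
      · have hdℓ : depth ℓ = 1 := by
          have : depth ℓ = depth i + 1 := rfl; omega
        rw [hsl, if_neg (by omega)]
        ring
      · intro j _ hp
        have := hp.1
        omega
    · -- i has a parent
      have hfp : univ.filter (fun j => IsParent j i) = {parent hd3 i} := by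
        ext j
        rw [mem_filter, mem_singleton]
        constructor
        · rintro ⟨-, hp⟩; exact eq_parent hd3 hp
        · rintro rfl
          exact ⟨mem_univ _, isParent_parent hd3 (by omega)⟩
      rw [hfp, Finset.sum_singleton]
      have hdℓ2 : 2 ≤ depth ℓ := by
        have : depth ℓ = depth i + 1 := rfl; omega
      rw [hsl, if_pos hdℓ2]
      ring


/-- Explicit injection of `(d-1)`-ary strings into free vertices. -/
def Jaux (hd3 : 3 ≤ d) : (m : ℕ) → m ≤ h → (Fin m → Fin (d - 1)) → Vert d h
  | 0, _, _ => mkVert hd3 0 (by omega) (fun _ => 0) (by omega) (by omega)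
  | 1, hm, η => mkVert hd3 1 hm (fun _ => (η 0).val)
      (fun _ => by show (η 0).val < d; have := (η 0).isLt; omega) (by omega)
  | (m + 2), hm, η =>
    if hη : (η 0).val = d - 2 ∧ (η (Fin.last (m + 1))).val = d - 2 then
      Jaux hd3 m (by omega) (fun i => η ⟨i.val + 1, by omega⟩)
    else
      mkVert hd3 (m + 2) hm (fun j =>
          if j = 0 then (if (η (Fin.last (m + 1))).val = d - 2 then d - 1 else (η 0).val)
          else if j = m + 1 then
            (if (η (Fin.last (m + 1))).val = d - 2 then (η 0).val
              else (η (Fin.last (m + 1))).val)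
          else if hj : j < m + 1 then (η ⟨j, by omega⟩).val else 0)
        (fun _ => by
          rw [if_pos rfl]
          split
          · omega
          · have := (η 0).isLt; omega)
        (fun j h0 hlt => by
          rw [if_neg (by omega)]
          by_cases hj2 : j = m + 1
          · rw [if_pos hj2]
            split
            · have := (η 0).isLt; omega
            · have := (η (Fin.last (m + 1))).isLt; omega
          · rw [if_neg hj2, dif_pos (by omega : j < m + 1)]
            have := (η ⟨j, by omega⟩).isLt; omega)

lemma Jaux_depth_le (hd3 : 3 ≤ d) :
    ∀ (m : ℕ) (hm : m ≤ h) (η : Fin m → Fin (d - 1)), depth (Jaux hd3 m hm η) ≤ m := by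
  intro m
  induction m using Nat.strong_induction_on with
  | _ m ih =>
    match m with
    | 0 => intro hm η; rw [Jaux]; rw [mkVert_depth]
    | 1 => intro hm η; rw [Jaux]; rw [mkVert_depth]
    | (m + 2) =>
      intro hm η
      rw [Jaux]
      split
      · have := ih m (by omega) (by omega) (fun i => η ⟨i.val + 1, by omega⟩)
        omega
      · rw [mkVert_depth]

lemma Jaux_depth_mod (hd3 : 3 ≤ d) :
    ∀ (m : ℕ) (hm : m ≤ h) (η : Fin m → Fin (d - 1)),
      depth (Jaux hd3 m hm η) % 2 = m % 2 := by
  intro m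
  induction m using Nat.strong_induction_on with
  | _ m ih =>
    match m with
    | 0 => intro hm η; rw [Jaux]; rw [mkVert_depth]
    | 1 => intro hm η; rw [Jaux]; rw [mkVert_depth]
    | (m + 2) =>
      intro hm η
      rw [Jaux]
      split
      · have := ih m (by omega) (by omega) (fun i => η ⟨i.val + 1, by omega⟩)
        omega
      · rw [mkVert_depth]

lemma Jaux_not_dep (hd3 : 3 ≤ d) :
    ∀ (m : ℕ) (hm : m ≤ h) (η : Fin m → Fin (d - 1)), ¬ Dep (Jaux hd3 m hm η) := by
  intro m
  induction m using Nat.strong_induction_on with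
  | _ m ih =>
    match m with
    | 0 =>
      intro hm η
      rw [Jaux]
      rintro ⟨hpos, -⟩
      rw [mkVert_depth] at hpos
      omega
    | 1 =>
      intro hm η
      rw [Jaux]
      rintro ⟨hpos, hcv⟩
      rw [mkVert_depth] at hpos hcv
      rw [mkVert_coordv] at hcv
      rw [if_pos (by omega : (1:ℕ) - 1 < 1), if_pos (rfl : (1:ℕ) = 1)] at hcv
      have := (η 0).isLt
      omega
    | (m + 2) =>
      intro hm η
      rw [Jaux]
      split
      · exact ih m (by omega) (by omega) _
      · rename_i hη
        rintro ⟨hpos, hcv⟩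
        rw [mkVert_depth] at hpos hcv
        rw [mkVert_coordv] at hcv
        rw [show m + 2 - 1 = m + 1 from rfl] at hcv
        rw [if_pos (show m + 1 < m + 2 by omega)] at hcv
        rw [if_neg (show ¬(m + 1 = 0) by omega)] at hcv
        rw [if_pos (rfl : m + 1 = m + 1)] at hcv
        rw [if_neg (show ¬(m + 2 = 1) by omega)] at hcv
        split at hcv
        · -- last coordinate was η 0, with η last = d-2, so η 0 ≠ d-2
          rename_i hlast
          exact hη ⟨hcv, hlast⟩
        · rename_i hlast
          exact hlast hcv

lemma Jaux_inj (hd3 : 3 ≤ d) :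
    ∀ (m : ℕ) (hm : m ≤ h) (η η' : Fin m → Fin (d - 1)),
      Jaux hd3 m hm η = Jaux hd3 m hm η' → η = η' := by
  intro m
  induction m using Nat.strong_induction_on with
  | _ m ih =>
    match m with
    | 0 => intro hm η η' _; funext i; exact absurd i.isLt (by omega)
    | 1 =>
      intro hm η η' heq
      rw [Jaux, Jaux] at heq
      have hc := congrArg (fun v => coordv v 0) heq
      rw [mkVert_coordv, mkVert_coordv] at hc
      simp only [if_pos (by omega : (0:ℕ) < 1)] at hc
      funext i
      have hi : i = 0 := Subsingleton.elim _ _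
      rw [hi]
      exact Fin.ext hc
    | (m + 2) =>
      intro hm η η' heq
      rw [Jaux, Jaux] at heq
      by_cases hη : (η 0).val = d - 2 ∧ (η (Fin.last (m + 1))).val = d - 2 <;>
        by_cases hη' : (η' 0).val = d - 2 ∧ (η' (Fin.last (m + 1))).val = d - 2
      · -- both recurse
        rw [dif_pos hη, dif_pos hη'] at heq
        have hmid := ih m (by omega) (by omega) _ _ heq
        funext i
        rcases Nat.eq_zero_or_pos i.val with h0 | h0
        · apply Fin.ext
          rw [show i = 0 from Fin.ext h0]
          omega
        · rcases Nat.lt_or_ge i.val (m + 1) with h1 | h1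
          · have := congrArg (fun f => (f ⟨i.val - 1, by omega⟩ : Fin (d-1))) hmid
            dsimp only at this
            have hvi : i.val - 1 + 1 = i.val := by omega
            convert this using 2 <;> exact (Fin.ext hvi.symm)
          · have hilast : i = Fin.last (m + 1) := Fin.ext (by have := i.isLt; simp; omega)
            apply Fin.ext
            rw [hilast]
            omega
      · -- mixed: depths differ
        rw [dif_pos hη, dif_neg hη'] at heq
        exfalso
        have h2 := congrArg depth heq
        rw [mkVert_depth] at h2
        exact absurd h2 (Nat.ne_of_lt (Nat.lt_of_le_of_lt (Jaux_depth_le hd3 m _ _)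
          (by omega)))
      · rw [dif_neg hη, dif_pos hη'] at heq
        exfalso
        have h2 := congrArg depth heq
        rw [mkVert_depth] at h2
        exact absurd h2.symm (Nat.ne_of_lt (Nat.lt_of_le_of_lt (Jaux_depth_le hd3 m _ _)
          (by omega)))
      · -- both explicit
        rw [dif_neg hη, dif_neg hη'] at heq
        have hc : ∀ j : ℕ, j < m + 2 →
            (if j = 0 then (if (η (Fin.last (m + 1))).val = d - 2 then d - 1 else (η 0).val)
              else if j = m + 1 then
                (if (η (Fin.last (m + 1))).val = d - 2 then (η 0).val
                  else (η (Fin.last (m + 1))).val)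
              else if hj : j < m + 1 then (η ⟨j, by omega⟩).val else 0)
            = (if j = 0 then (if (η' (Fin.last (m + 1))).val = d - 2 then d - 1 else (η' 0).val)
              else if j = m + 1 then
                (if (η' (Fin.last (m + 1))).val = d - 2 then (η' 0).val
                  else (η' (Fin.last (m + 1))).val)
              else if hj : j < m + 1 then (η' ⟨j, by omega⟩).val else 0) := by
          intro j hj
          have := congrArg (fun v => coordv v j) heq
          rw [mkVert_coordv, mkVert_coordv, if_pos hj, if_pos hj] at this
          exact this
        have e0 := hc 0 (by omega)
        rw [if_pos (rfl : (0:ℕ) = 0), if_pos (rfl : (0:ℕ) = 0)] at e0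
        have eL := hc (m + 1) (by omega)
        rw [if_neg (show ¬(m + 1 = 0) by omega), if_neg (show ¬(m + 1 = 0) by omega),
          if_pos (rfl : m + 1 = m + 1), if_pos (rfl : m + 1 = m + 1)] at eL
        have hfl : (η 0).val = (η' 0).val ∧
            (η (Fin.last (m + 1))).val = (η' (Fin.last (m + 1))).val := by
          by_cases c1 : (η (Fin.last (m + 1))).val = d - 2 <;>
            by_cases c2 : (η' (Fin.last (m + 1))).val = d - 2
          · rw [if_pos c1, if_pos c2] at eL
            exact ⟨eL, by omega⟩
          · rw [if_pos c1, if_neg c2] at e0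
            have := (η' 0).isLt
            omega
          · rw [if_neg c1, if_pos c2] at e0
            have := (η 0).isLt
            omega
          · rw [if_neg c1, if_neg c2] at e0
            rw [if_neg c1, if_neg c2] at eL
            exact ⟨e0, eL⟩
        funext i
        rcases Nat.eq_zero_or_pos i.val with h0 | h0
        · apply Fin.ext
          rw [show i = 0 from Fin.ext h0]
          exact hfl.1
        · rcases Nat.lt_or_ge i.val (m + 1) with h1 | h1
          · have em := hc i.val (by omega)
            rw [if_neg (show ¬(i.val = 0) by omega), if_neg (show ¬(i.val = 0) by omega),
              if_neg (show ¬(i.val = m + 1) by omega),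
              if_neg (show ¬(i.val = m + 1) by omega), dif_pos h1, dif_pos h1] at em
            apply Fin.ext
            convert em using 2 <;> exact Fin.ext rfl
          · have hilast : i = Fin.last (m + 1) := Fin.ext (by have := i.isLt; simp; omega)
            apply Fin.ext
            rw [hilast]
            exact hfl.2


/-- The chosen family of free vertices. -/
def J (hd3 : 3 ≤ d) (k : Fin ((d - 1) ^ h)) : Vert d h :=
  Jaux hd3 h le_rfl (finFunctionFinEquiv.symm k)

lemma J_inj (hd3 : 3 ≤ d) : Function.Injective (J (d := d) (h := h) hd3) := by
  intro k k' hk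
  have := Jaux_inj hd3 h le_rfl _ _ hk
  exact finFunctionFinEquiv.symm.injective this

lemma J_even (hd3 : 3 ≤ d) (k : Fin ((d - 1) ^ h)) : depth (J hd3 k) % 2 = h % 2 :=
  Jaux_depth_mod hd3 h le_rfl _

lemma J_not_dep (hd3 : 3 ≤ d) (k : Fin ((d - 1) ^ h)) : ¬ Dep (J hd3 k) :=
  Jaux_not_dep hd3 h le_rfl _

/-- The weight vector attached to the `k`-th free vertex. -/
def wt (hd3 : 3 ≤ d) (k : Fin ((d - 1) ^ h)) : Vert d h → ZMod d :=
  sol hd3 (fun v => if v = J hd3 k then 1 else 0)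

lemma wt_J (hd3 : 3 ≤ d) (k k' : Fin ((d - 1) ^ h)) :
    wt hd3 k (J hd3 k') = if k' = k then 1 else 0 := by
  unfold wt
  rw [sol_free hd3 _ (J_even hd3 k') (J_not_dep hd3 k')]
  by_cases hk : k' = k
  · rw [if_pos hk, if_pos (by rw [hk])]
  · rw [if_neg hk, if_neg (fun hc => hk (J_inj hd3 hc))]

open Finset in
/-- The functional `ℤ^V → (ℤ/d)^N`. -/
def phi (hd3 : 3 ≤ d) : (Vert d h → ℤ) →+ (Fin ((d - 1) ^ h) → ZMod d) where
  toFun := fun y k => ∑ v, wt hd3 k v * ((y v : ℤ) : ZMod d)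
  map_zero' := by
    funext k
    simp
  map_add' := by
    intro a b
    funext k
    simp only [Pi.add_apply, Int.cast_add, mul_add, Pi.add_apply]
    rw [Finset.sum_add_distrib]

lemma phi_apply (hd3 : 3 ≤ d) (y : Vert d h → ℤ) (k : Fin ((d - 1) ^ h)) :
    phi hd3 y k = ∑ v, wt hd3 k v * ((y v : ℤ) : ZMod d) := rfl

open Finset in
lemma phi_single (hd3 : 3 ≤ d) (j : Vert d h) (k : Fin ((d - 1) ^ h)) :
    phi hd3 (Pi.single j 1) k = wt hd3 k j := by
  rw [phi_apply]
  rw [Finset.sum_eq_single j]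
  · rw [Pi.single_eq_same]
    push_cast
    rw [mul_one]
  · intro v _ hv
    rw [Pi.single_eq_of_ne hv]
    norm_num
  · intro hj
    exact absurd (mem_univ j) hj

open Finset in
lemma phi_delta (hd3 : 3 ≤ d) (i : Vert d h) : phi hd3 (delta d h i) = 0 := by
  unfold delta
  rw [map_sub, map_sub, map_zsmul, map_sum, map_sum]
  funext k
  simp only [Pi.sub_apply, Pi.smul_apply, Finset.sum_apply, Pi.zero_apply]
  have hrel := sol_relation hd3 (fun v => if v = J hd3 k then 1 else 0) i
  have h1 : ∀ j : Vert d h, phi hd3 (Pi.single j 1) k = wt hd3 k j := fun j => phi_single hd3 j k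
  rw [h1, Finset.sum_congr rfl (fun j _ => h1 j), Finset.sum_congr rfl (fun j _ => h1 j)]
  have h2 : (d : ℤ) • wt hd3 k i = 0 := by
    rw [zsmul_eq_mul]
    push_cast
    rw [ZMod.natCast_self, zero_mul]
  rw [h2]
  have h3 : (∑ j ∈ univ.filter (fun j => IsParent j i), wt hd3 k j)
      + (∑ j ∈ univ.filter (fun j => IsParent i j), wt hd3 k j) = 0 := hrel
  linear_combination (norm := ring_nf) -h3

lemma lat_le_ker (hd3 : 3 ≤ d) : lat d h ≤ (phi (d := d) (h := h) hd3).ker := by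
  apply AddSubgroup.closure_le _ |>.mpr
  rintro y ⟨i, rfl⟩
  exact phi_delta hd3 i

/-- Part 1: the surjection. -/
lemma exists_surjection (hd3 : 3 ≤ d) :
    ∃ f : SG d h →+ (Fin ((d - 1) ^ h) → ZMod d), Function.Surjective f := by
  haveI : NeZero d := ⟨by omega⟩
  refine ⟨QuotientAddGroup.lift (lat d h) (phi hd3)
    (lat_le_ker hd3), ?_⟩
  intro g
  refine ⟨QuotientAddGroup.mk (∑ k, ((g k).val : ℤ) • Pi.single (J hd3 k) (1 : ℤ)), ?_⟩
  rw [QuotientAddGroup.lift_mk']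
  rw [map_sum]
  funext k'
  rw [Finset.sum_apply]
  have h1 : ∀ k, phi hd3 (((g k).val : ℤ) • Pi.single (J hd3 k) (1 : ℤ)) k'
      = ((g k).val : ℤ) • (if k = k' then (1 : ZMod d) else 0) := by
    intro k
    rw [map_zsmul]
    show ((g k).val : ℤ) • (phi hd3 (Pi.single (J hd3 k) 1) k') = _
    rw [phi_single, wt_J]
  rw [Finset.sum_congr rfl (fun k _ => h1 k)]
  rw [Finset.sum_eq_single k']
  · rw [if_pos rfl, zsmul_eq_mul, mul_one]
    push_cast
    exact ZMod.natCast_rightInverse (g k')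
  · intro b _ hb
    rw [if_neg hb, smul_zero]
  · intro hk
    exact absurd (Finset.mem_univ k') hk

end SandpileTree

open SandpileTree

/-- The sandpile group `G(d,h)` of the `d`-regular tree of depth `h` (`d ≥ 3`, `h ≥ 1`)
surjects onto `(ℤ/dℤ)^{(d−1)^h}`; consequently its rank (the minimum number of
generators) is at least `(d−1)^h`: every generating set has at least `(d−1)^h`
elements. -/
theorem surjects_onto_zmod_power (d h : ℕ) (hd : 3 ≤ d) (hh : 1 ≤ h) :
    (∃ f : SG d h →+ (Fin ((d - 1) ^ h) → ZMod d), Function.Surjective f) ∧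
    (∀ S : Finset (SG d h), AddSubgroup.closure (S : Set (SG d h)) = ⊤ →
      (d - 1) ^ h ≤ S.card) := by
  obtain ⟨f, hf⟩ := SandpileTree.exists_surjection (d := d) (h := h) hd
  refine ⟨⟨f, hf⟩, ?_⟩
  intro S hS
  have hd1 : d ≠ 1 := by omega
  have hp : d.minFac.Prime := Nat.minFac_prime hd1
  haveI : Fact d.minFac.Prime := ⟨hp⟩
  haveI : NeZero d.minFac := ⟨hp.ne_zero⟩
  let π : ZMod d →+* ZMod d.minFac := ZMod.castHom (Nat.minFac_dvd d) (ZMod d.minFac)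
  let g : (Fin ((d - 1) ^ h) → ZMod d) →+ (Fin ((d - 1) ^ h) → ZMod d.minFac) :=
    { toFun := fun x k => π (x k)
      map_zero' := by funext k; simp
      map_add' := by intro a b; funext k; simp }
  have hg : Function.Surjective g := by
    intro y
    refine ⟨fun k => ((y k).val : ZMod d), ?_⟩
    funext k
    show π ((y k).val : ZMod d) = y k
    rw [map_natCast]
    exact ZMod.natCast_rightInverse (y k)
  have hF : Function.Surjective (g.comp f) := hg.comp hf
  have hclos : AddSubgroup.closure (⇑(g.comp f) '' (S : Set (SG d h))) = ⊤ := by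
    rw [← AddMonoidHom.map_closure (g.comp f), hS, ← AddMonoidHom.range_eq_map (g.comp f)]
    exact AddMonoidHom.range_eq_top_of_surjective (g.comp f) hF
  classical
  set T : Finset (Fin ((d - 1) ^ h) → ZMod d.minFac) := S.image (g.comp f) with hTdef
  have hT : AddSubgroup.closure (T : Set (Fin ((d - 1) ^ h) → ZMod d.minFac)) = ⊤ := by
    rw [hTdef, Finset.coe_image]
    exact hclos
  have hspan : Submodule.span (ZMod d.minFac) (T : Set (Fin ((d - 1) ^ h) → ZMod d.minFac)) = ⊤ := by
    rw [Submodule.eq_top_iff']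
    intro x
    have hx : x ∈ AddSubgroup.closure (T : Set (Fin ((d - 1) ^ h) → ZMod d.minFac)) := by
      rw [hT]; trivial
    have hle : AddSubgroup.closure (T : Set (Fin ((d - 1) ^ h) → ZMod d.minFac)) ≤
        (Submodule.span (ZMod d.minFac) (T : Set (Fin ((d - 1) ^ h) → ZMod d.minFac))).toAddSubgroup :=
      (AddSubgroup.closure_le _).mpr Submodule.subset_span
    exact (Submodule.mem_toAddSubgroup _).mp (hle hx)
  have hrank : (d - 1) ^ h ≤ T.card := by
    have h1 : Module.finrank (ZMod d.minFac) (Fin ((d - 1) ^ h) → ZMod d.minFac) = (d - 1) ^ h :=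
      Module.finrank_fin_fun (ZMod d.minFac)
    have h2 := finrank_span_finset_le_card (R := ZMod d.minFac) T
    have h3 : (T : Set (Fin ((d - 1) ^ h) → ZMod d.minFac)).finrank (ZMod d.minFac) = (d - 1) ^ h := by
      rw [Set.finrank, hspan, finrank_top, h1]
    omega
  calc (d - 1) ^ h ≤ T.card := hrank
    _ ≤ S.card := Finset.card_image_le
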